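/- In any associative unital ℂ-algebra A whose elements b⁺, b⁻, f⁺, f⁻ satisfy the defining relations of P_BF^{(1,1)}, the even bilinears act on the odd elements Q^±, R^± by: [{b⁺, b⁻}, Q^±] = ∓2Q^±; [[f⁺, f⁻], Q^±] = ±2Q^±; [{b⁺, b⁻}, R^±] = ±2R^±; [[f⁺, f⁻], R^±] = ±2R^±; [{b⁺, b⁻}, [f⁺, f⁻]] = 0; [(b⁺)², Q⁺] = −2R⁺; [(b⁺)², Q⁻] = 0; [(b⁺)², R⁺] = 0; [(b⁺)², R⁻] = −2Q⁻; [(b⁻)², Q⁺] = 0; [(b⁻)², Q⁻] = 2R⁻; [(b⁻)², R⁺] = 2Q⁺; [(b⁻)², R⁻] = 0. -/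
import Mathlib


/-- The commutator `[x, y] = x*y - y*x`. -/
def pbComm {A : Type*} [Ring A] (x y : A) : A := x * y - y * x

/-- The anticommutator `{x, y} = x*y + y*x`. -/
def pbAComm {A : Type*} [Ring A] (x y : A) : A := x * y + y * x

/-- A sign, i.e. `+1` or `-1`, regarded as an integer. -/
def IsSign (x : ℤ) : Prop := x = 1 ∨ x = -1

/-- The defining relations of the relative parabose set `P_BF^{(1,1)}` in a single
parabosonic and a single parafermionic degree of freedom: `b 1 = b⁺`, `b (-1) = b⁻`,
`f 1 = f⁺`, `f (-1) = f⁻`. -/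
structure PBF11Relations {A : Type*} [Ring A] [Algebra ℂ A] (b f : ℤ → A) : Prop where
  rel_bbb : ∀ (ξ η ε : ℤ), IsSign ξ → IsSign η → IsSign ε →
    pbComm (pbAComm (b ξ) (b η)) (b ε)
      = ((ε - η : ℤ) : ℂ) • b ξ + ((ε - ξ : ℤ) : ℂ) • b η
  rel_fff : ∀ (ξ η ε : ℤ), IsSign ξ → IsSign η → IsSign ε →
    pbComm (pbComm (f ξ) (f η)) (f ε)
      = ((((ε - η) ^ 2 : ℤ) : ℂ) / 2) • f ξ - ((((ε - ξ) ^ 2 : ℤ) : ℂ) / 2) • f η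
  rel_bbf : ∀ (ξ η ε : ℤ), IsSign ξ → IsSign η → IsSign ε →
    pbComm (pbAComm (b ξ) (b η)) (f ε) = 0
  rel_ffb : ∀ (ξ η ε : ℤ), IsSign ξ → IsSign η → IsSign ε →
    pbComm (pbComm (f ξ) (f η)) (b ε) = 0
  rel_fbb : ∀ (ξ η ε : ℤ), IsSign ξ → IsSign η → IsSign ε →
    pbComm (pbAComm (f ξ) (b η)) (b ε) = ((ε - η : ℤ) : ℂ) • f ξ
  rel_bff : ∀ (ξ η ε : ℤ), IsSign ξ → IsSign η → IsSign ε →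
    pbAComm (pbAComm (b ξ) (f η)) (f ε) = ((((ε - η) ^ 2 : ℤ) : ℂ) / 2) • b ξ


section Helpers
variable {A : Type*} [Ring A] [Algebra ℂ A]

lemma pb_comm_acomm (E x y : A) :
    pbComm E (pbAComm x y) = pbAComm (pbComm E x) y + pbAComm x (pbComm E y) := by
  simp only [pbComm, pbAComm]; noncomm_ring

lemma pb_comm_comm (E x y : A) :
    pbComm E (pbComm x y) = pbComm (pbComm E x) y + pbComm x (pbComm E y) := by
  simp only [pbComm]; noncomm_ring

lemma pb_comm_smul (c : ℂ) (E x : A) : pbComm E (c • x) = c • pbComm E x := by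
  simp [pbComm, mul_smul_comm, smul_mul_assoc, smul_sub]

lemma pb_acomm_smul_left (c : ℂ) (x y : A) : pbAComm (c • x) y = c • pbAComm x y := by
  simp [pbAComm, mul_smul_comm, smul_mul_assoc, smul_add]

lemma pb_acomm_smul_right (c : ℂ) (x y : A) : pbAComm x (c • y) = c • pbAComm x y := by
  simp [pbAComm, mul_smul_comm, smul_mul_assoc, smul_add]

lemma pb_acomm_add_left (x y z : A) : pbAComm (x + y) z = pbAComm x z + pbAComm y z := by
  simp only [pbAComm]; noncomm_ring

lemma pb_acomm_zero_left (x : A) : pbAComm 0 x = 0 := by simp [pbAComm]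
lemma pb_acomm_zero_right (x : A) : pbAComm x 0 = 0 := by simp [pbAComm]
lemma pb_comm_zero_right (x : A) : pbComm x 0 = 0 := by simp [pbComm]

lemma pb_sq_comm (x y : A) : pbComm (x * x) y = (1/2 : ℂ) • pbComm (pbAComm x x) y := by
  have h : pbAComm x x = (2 : ℂ) • (x * x) := by simp [pbAComm, two_smul]
  rw [h]
  simp [pbComm, smul_mul_assoc, mul_smul_comm, smul_sub, smul_smul]
  try norm_num

end Helpers

/-- `Q⁺ := ½{b⁻, f⁺}`. -/
noncomputable def Qp {A : Type*} [Ring A] [Algebra ℂ A] (b f : ℤ → A) : A :=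
  (1 / 2 : ℂ) • pbAComm (b (-1)) (f 1)

/-- `Q⁻ := ½{b⁺, f⁻}`. -/
noncomputable def Qm {A : Type*} [Ring A] [Algebra ℂ A] (b f : ℤ → A) : A :=
  (1 / 2 : ℂ) • pbAComm (b 1) (f (-1))

/-- `R⁺ := ½{b⁺, f⁺}`. -/
noncomputable def Rp {A : Type*} [Ring A] [Algebra ℂ A] (b f : ℤ → A) : A :=
  (1 / 2 : ℂ) • pbAComm (b 1) (f 1)

/-- `R⁻ := ½{b⁻, f⁻}`. -/
noncomputable def Rm {A : Type*} [Ring A] [Algebra ℂ A] (b f : ℤ → A) : A :=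
  (1 / 2 : ℂ) • pbAComm (b (-1)) (f (-1))

/-- The even bilinears of `P_BF^{(1,1)}` act on the odd elements `Q^±, R^±`
by the stated commutation relations. -/
theorem even_action_on_QR {A : Type*} [Ring A] [Algebra ℂ A]
    (b f : ℤ → A) (h : PBF11Relations b f) :
    pbComm (pbAComm (b 1) (b (-1))) (Qp b f) = (-2 : ℂ) • Qp b f ∧
    pbComm (pbAComm (b 1) (b (-1))) (Qm b f) = (2 : ℂ) • Qm b f ∧
    pbComm (pbComm (f 1) (f (-1))) (Qp b f) = (2 : ℂ) • Qp b f ∧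
    pbComm (pbComm (f 1) (f (-1))) (Qm b f) = (-2 : ℂ) • Qm b f ∧
    pbComm (pbAComm (b 1) (b (-1))) (Rp b f) = (2 : ℂ) • Rp b f ∧
    pbComm (pbAComm (b 1) (b (-1))) (Rm b f) = (-2 : ℂ) • Rm b f ∧
    pbComm (pbComm (f 1) (f (-1))) (Rp b f) = (2 : ℂ) • Rp b f ∧
    pbComm (pbComm (f 1) (f (-1))) (Rm b f) = (-2 : ℂ) • Rm b f ∧
    pbComm (pbAComm (b 1) (b (-1))) (pbComm (f 1) (f (-1))) = 0 ∧
    pbComm (b 1 * b 1) (Qp b f) = (-2 : ℂ) • Rp b f ∧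
    pbComm (b 1 * b 1) (Qm b f) = 0 ∧
    pbComm (b 1 * b 1) (Rp b f) = 0 ∧
    pbComm (b 1 * b 1) (Rm b f) = (-2 : ℂ) • Qm b f ∧
    pbComm (b (-1) * b (-1)) (Qp b f) = 0 ∧
    pbComm (b (-1) * b (-1)) (Qm b f) = (2 : ℂ) • Rm b f ∧
    pbComm (b (-1) * b (-1)) (Rp b f) = (2 : ℂ) • Qp b f ∧
    pbComm (b (-1) * b (-1)) (Rm b f) = 0 := by
  have s1 : IsSign 1 := Or.inl rfl
  have sm : IsSign (-1) := Or.inr rfl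
  refine ⟨?_, ?_, ?_, ?_, ?_, ?_, ?_, ?_, ?_, ?_, ?_, ?_, ?_, ?_, ?_, ?_, ?_⟩
  · rw [Qp, pb_comm_smul, pb_comm_acomm,
      h.rel_bbb 1 (-1) (-1) s1 sm sm, h.rel_bbf 1 (-1) 1 s1 sm s1]
    simp only [Qp, Qm, Rp, Rm, pb_acomm_add_left, pb_acomm_smul_left, pb_acomm_smul_right,
      pb_acomm_zero_left, pb_acomm_zero_right, pb_comm_zero_right, smul_smul, smul_add, smul_sub]
    try norm_num
    try module
    try simp [pbAComm, mul_smul_comm, smul_mul_assoc, smul_add, smul_smul, smul_sub]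
    try norm_num
    try module
  · rw [Qm, pb_comm_smul, pb_comm_acomm,
      h.rel_bbb 1 (-1) 1 s1 sm s1, h.rel_bbf 1 (-1) (-1) s1 sm sm]
    simp only [Qp, Qm, Rp, Rm, pb_acomm_add_left, pb_acomm_smul_left, pb_acomm_smul_right,
      pb_acomm_zero_left, pb_acomm_zero_right, pb_comm_zero_right, smul_smul, smul_add, smul_sub]
    try norm_num
    try module
    try simp [pbAComm, mul_smul_comm, smul_mul_assoc, smul_add, smul_smul, smul_sub]
    try norm_num
    try module
  · rw [Qp, pb_comm_smul, pb_comm_acomm,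
      h.rel_ffb 1 (-1) (-1) s1 sm sm, h.rel_fff 1 (-1) 1 s1 sm s1]
    simp only [Qp, Qm, Rp, Rm, pb_acomm_add_left, pb_acomm_smul_left, pb_acomm_smul_right,
      pb_acomm_zero_left, pb_acomm_zero_right, pb_comm_zero_right, smul_smul, smul_add, smul_sub]
    try norm_num
    try module
    try simp [pbAComm, mul_smul_comm, smul_mul_assoc, smul_add, smul_smul, smul_sub]
    try norm_num
    try module
  · rw [Qm, pb_comm_smul, pb_comm_acomm,
      h.rel_ffb 1 (-1) 1 s1 sm s1, h.rel_fff 1 (-1) (-1) s1 sm sm]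
    simp only [Qp, Qm, Rp, Rm, pb_acomm_add_left, pb_acomm_smul_left, pb_acomm_smul_right,
      pb_acomm_zero_left, pb_acomm_zero_right, pb_comm_zero_right, smul_smul, smul_add, smul_sub]
    try norm_num
    try module
    try simp [pbAComm, mul_smul_comm, smul_mul_assoc, smul_add, smul_smul, smul_sub]
    try norm_num
    try module
  · rw [Rp, pb_comm_smul, pb_comm_acomm,
      h.rel_bbb 1 (-1) 1 s1 sm s1, h.rel_bbf 1 (-1) 1 s1 sm s1]
    simp only [Qp, Qm, Rp, Rm, pb_acomm_add_left, pb_acomm_smul_left, pb_acomm_smul_right,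
      pb_acomm_zero_left, pb_acomm_zero_right, pb_comm_zero_right, smul_smul, smul_add, smul_sub]
    try norm_num
    try module
    try simp [pbAComm, mul_smul_comm, smul_mul_assoc, smul_add, smul_smul, smul_sub]
    try norm_num
    try module
  · rw [Rm, pb_comm_smul, pb_comm_acomm,
      h.rel_bbb 1 (-1) (-1) s1 sm sm, h.rel_bbf 1 (-1) (-1) s1 sm sm]
    simp only [Qp, Qm, Rp, Rm, pb_acomm_add_left, pb_acomm_smul_left, pb_acomm_smul_right,
      pb_acomm_zero_left, pb_acomm_zero_right, pb_comm_zero_right, smul_smul, smul_add, smul_sub]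
    try norm_num
    try module
    try simp [pbAComm, mul_smul_comm, smul_mul_assoc, smul_add, smul_smul, smul_sub]
    try norm_num
    try module
  · rw [Rp, pb_comm_smul, pb_comm_acomm,
      h.rel_ffb 1 (-1) 1 s1 sm s1, h.rel_fff 1 (-1) 1 s1 sm s1]
    simp only [Qp, Qm, Rp, Rm, pb_acomm_add_left, pb_acomm_smul_left, pb_acomm_smul_right,
      pb_acomm_zero_left, pb_acomm_zero_right, pb_comm_zero_right, smul_smul, smul_add, smul_sub]
    try norm_num
    try module
    try simp [pbAComm, mul_smul_comm, smul_mul_assoc, smul_add, smul_smul, smul_sub]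
    try norm_num
    try module
  · rw [Rm, pb_comm_smul, pb_comm_acomm,
      h.rel_ffb 1 (-1) (-1) s1 sm sm, h.rel_fff 1 (-1) (-1) s1 sm sm]
    simp only [Qp, Qm, Rp, Rm, pb_acomm_add_left, pb_acomm_smul_left, pb_acomm_smul_right,
      pb_acomm_zero_left, pb_acomm_zero_right, pb_comm_zero_right, smul_smul, smul_add, smul_sub]
    try norm_num
    try module
    try simp [pbAComm, mul_smul_comm, smul_mul_assoc, smul_add, smul_smul, smul_sub]
    try norm_num
    try module
  · rw [pb_comm_comm, h.rel_bbf 1 (-1) 1 s1 sm s1, h.rel_bbf 1 (-1) (-1) s1 sm sm]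
    simp [pbComm]
  · rw [pb_sq_comm, Qp, pb_comm_smul, pb_comm_acomm,
      h.rel_bbb 1 1 (-1) s1 s1 sm, h.rel_bbf 1 1 1 s1 s1 s1]
    simp only [Qp, Qm, Rp, Rm, pb_acomm_add_left, pb_acomm_smul_left, pb_acomm_smul_right,
      pb_acomm_zero_left, pb_acomm_zero_right, pb_comm_zero_right, smul_smul, smul_add, smul_sub]
    try norm_num
    try module
    try simp [pbAComm, mul_smul_comm, smul_mul_assoc, smul_add, smul_smul, smul_sub]
    try norm_num
    try module
  · rw [pb_sq_comm, Qm, pb_comm_smul, pb_comm_acomm,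
      h.rel_bbb 1 1 1 s1 s1 s1, h.rel_bbf 1 1 (-1) s1 s1 sm]
    simp only [pb_acomm_add_left, pb_acomm_smul_left, pb_acomm_smul_right,
      pb_acomm_zero_left, pb_acomm_zero_right, pb_comm_zero_right, smul_smul, smul_add, smul_sub]
    try norm_num
    try module
    try simp [pbAComm, mul_smul_comm, smul_mul_assoc, smul_add, smul_smul, smul_sub]
    try norm_num
    try module
  · rw [pb_sq_comm, Rp, pb_comm_smul, pb_comm_acomm,
      h.rel_bbb 1 1 1 s1 s1 s1, h.rel_bbf 1 1 1 s1 s1 s1]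
    simp only [pb_acomm_add_left, pb_acomm_smul_left, pb_acomm_smul_right,
      pb_acomm_zero_left, pb_acomm_zero_right, pb_comm_zero_right, smul_smul, smul_add, smul_sub]
    try norm_num
    try module
    try simp [pbAComm, mul_smul_comm, smul_mul_assoc, smul_add, smul_smul, smul_sub]
    try norm_num
    try module
  · rw [pb_sq_comm, Rm, pb_comm_smul, pb_comm_acomm,
      h.rel_bbb 1 1 (-1) s1 s1 sm, h.rel_bbf 1 1 (-1) s1 s1 sm]
    simp only [Qp, Qm, Rp, Rm, pb_acomm_add_left, pb_acomm_smul_left, pb_acomm_smul_right,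
      pb_acomm_zero_left, pb_acomm_zero_right, pb_comm_zero_right, smul_smul, smul_add, smul_sub]
    try norm_num
    try module
    try simp [pbAComm, mul_smul_comm, smul_mul_assoc, smul_add, smul_smul, smul_sub]
    try norm_num
    try module
  · rw [pb_sq_comm, Qp, pb_comm_smul, pb_comm_acomm,
      h.rel_bbb (-1) (-1) (-1) sm sm sm, h.rel_bbf (-1) (-1) 1 sm sm s1]
    simp only [pb_acomm_add_left, pb_acomm_smul_left, pb_acomm_smul_right,
      pb_acomm_zero_left, pb_acomm_zero_right, pb_comm_zero_right, smul_smul, smul_add, smul_sub]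
    try norm_num
    try module
    try simp [pbAComm, mul_smul_comm, smul_mul_assoc, smul_add, smul_smul, smul_sub]
    try norm_num
    try module
  · rw [pb_sq_comm, Qm, pb_comm_smul, pb_comm_acomm,
      h.rel_bbb (-1) (-1) 1 sm sm s1, h.rel_bbf (-1) (-1) (-1) sm sm sm]
    simp only [Qp, Qm, Rp, Rm, pb_acomm_add_left, pb_acomm_smul_left, pb_acomm_smul_right,
      pb_acomm_zero_left, pb_acomm_zero_right, pb_comm_zero_right, smul_smul, smul_add, smul_sub]
    try norm_num
    try module
    try simp [pbAComm, mul_smul_comm, smul_mul_assoc, smul_add, smul_smul, smul_sub]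
    try norm_num
    try module
  · rw [pb_sq_comm, Rp, pb_comm_smul, pb_comm_acomm,
      h.rel_bbb (-1) (-1) 1 sm sm s1, h.rel_bbf (-1) (-1) 1 sm sm s1]
    simp only [Qp, Qm, Rp, Rm, pb_acomm_add_left, pb_acomm_smul_left, pb_acomm_smul_right,
      pb_acomm_zero_left, pb_acomm_zero_right, pb_comm_zero_right, smul_smul, smul_add, smul_sub]
    try norm_num
    try module
    try simp [pbAComm, mul_smul_comm, smul_mul_assoc, smul_add, smul_smul, smul_sub]
    try norm_num
    try module
  · rw [pb_sq_comm, Rm, pb_comm_smul, pb_comm_acomm,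
      h.rel_bbb (-1) (-1) (-1) sm sm sm, h.rel_bbf (-1) (-1) (-1) sm sm sm]
    simp only [pb_acomm_add_left, pb_acomm_smul_left, pb_acomm_smul_right,
      pb_acomm_zero_left, pb_acomm_zero_right, pb_comm_zero_right, smul_smul, smul_add, smul_sub]
    try norm_num
    try module
    try simp [pbAComm, mul_smul_comm, smul_mul_assoc, smul_add, smul_smul, smul_sub]
    try norm_num
    try module
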